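/- For every F ⊆ {0,1}^n, the length-restricted nondeterministic state complexity s'_N(F) is at most ∑_{i=0}^{k} a_i, where a_i = min(2^i, 2^(2^(n−i)) − 1) and k is the greatest index such that a_{k−1} < a_k. -/

import Mathlib

/-- The term a_i = min(2^i, 2^(2^(n−i)) − 1) of the Champarnaud–Pin sum. -/
def cpTerm (n i : ℕ) : ℕ := min (2 ^ i) (2 ^ (2 ^ (n - i)) - 1)

open List (Vector)

namespace CPProof

/-! ### Generic NFA lemmas -/

lemma evalFrom_cons {α σ : Type*} (M : NFA α σ) (S : Set σ) (c : α) (v : List α) :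
    M.evalFrom S (c :: v) = M.evalFrom (M.stepSet S c) v := rfl

lemma evalFrom_append' {α σ : Type*} (M : NFA α σ) (S : Set σ) (a b : List α) :
    M.evalFrom S (a ++ b) = M.evalFrom (M.evalFrom S a) b := by
  simp [NFA.evalFrom, List.foldl_append]

lemma stepSet_singleton {α σ : Type*} (M : NFA α σ) (s : σ) (a : α) :
    M.stepSet {s} a = M.step s a := by
  ext q; simp [NFA.mem_stepSet]

lemma mem_evalFrom_iff {α σ : Type*} (M : NFA α σ) (v : List α) (S : Set σ) (q : σ) :
    q ∈ M.evalFrom S v ↔ ∃ s ∈ S, q ∈ M.evalFrom {s} v := by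
  induction v generalizing S with
  | nil => simp [NFA.evalFrom_nil]
  | cons c v ih =>
    rw [evalFrom_cons, ih]
    constructor
    · rintro ⟨t, ht, hq⟩
      rw [NFA.mem_stepSet] at ht
      obtain ⟨s, hs, hts⟩ := ht
      refine ⟨s, hs, ?_⟩
      rw [evalFrom_cons, stepSet_singleton, ih]
      exact ⟨t, hts, hq⟩
    · rintro ⟨s, hs, hq⟩
      rw [evalFrom_cons, stepSet_singleton, ih] at hq
      obtain ⟨t, ht, hq⟩ := hq
      exact ⟨t, M.mem_stepSet.2 ⟨s, hs, ht⟩, hq⟩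

lemma nonempty_evalFrom_iff {α σ : Type*} (M : NFA α σ) (S : Set σ) (v : List α) :
    (M.evalFrom S v).Nonempty ↔ ∃ s ∈ S, (M.evalFrom {s} v).Nonempty := by
  constructor
  · rintro ⟨q, hq⟩
    rw [mem_evalFrom_iff] at hq
    obtain ⟨s, hs, h⟩ := hq
    exact ⟨s, hs, q, h⟩
  · rintro ⟨s, hs, q, h⟩
    exact ⟨q, (mem_evalFrom_iff M v S q).2 ⟨s, hs, h⟩⟩

/-- Transfer an NFA to `Fin S` given a cardinality bound. -/
lemma transfer {σ : Type} [Fintype σ] (M : NFA Bool σ) (S : ℕ)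
    (h : Fintype.card σ ≤ S) : ∃ M' : NFA Bool (Fin S), M'.accepts = M.accepts := by
  obtain ⟨f⟩ := Function.Embedding.nonempty_of_card_le (β := Fin S) (by simpa using h)
  refine ⟨⟨fun y c => {y' | ∃ q q', f q = y ∧ f q' = y' ∧ q' ∈ M.step q c},
      f '' M.start, f '' M.accept⟩, ?_⟩
  set M' : NFA Bool (Fin S) :=
    ⟨fun y c => {y' | ∃ q q', f q = y ∧ f q' = y' ∧ q' ∈ M.step q c},
      f '' M.start, f '' M.accept⟩ with hM'
  have hstep : ∀ (S₀ : Set σ) (c : Bool), M'.stepSet (f '' S₀) c = f '' M.stepSet S₀ c := by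
    intro S₀ c
    ext y'
    constructor
    · intro hy'
      rw [NFA.mem_stepSet] at hy'
      obtain ⟨y, hy, hstep'⟩ := hy'
      obtain ⟨s, hs, rfl⟩ := hy
      change ∃ q q', f q = f s ∧ f q' = y' ∧ q' ∈ M.step q c at hstep'
      obtain ⟨q, q', hq, rfl, hmem⟩ := hstep'
      have : q = s := f.injective hq
      subst this
      exact Set.mem_image_of_mem f (M.mem_stepSet.2 ⟨q, hs, hmem⟩)
    · intro hy'
      obtain ⟨t, ht, rfl⟩ := hy'
      rw [NFA.mem_stepSet] at ht
      obtain ⟨s, hs, hts⟩ := ht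
      rw [NFA.mem_stepSet]
      exact ⟨f s, Set.mem_image_of_mem f hs, s, t, rfl, rfl, hts⟩
  have heval : ∀ (v : List Bool) (S₀ : Set σ),
      M'.evalFrom (f '' S₀) v = f '' M.evalFrom S₀ v := by
    intro v
    induction v with
    | nil => intro S₀; simp [NFA.evalFrom_nil]
    | cons c v ih => intro S₀; rw [evalFrom_cons, evalFrom_cons, hstep, ih]
  ext x
  rw [NFA.mem_accepts, NFA.mem_accepts]
  have hstarteq : M'.start = f '' M.start := rfl
  have hacc : M'.accept = f '' M.accept := rfl
  rw [hstarteq, hacc, heval]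
  constructor
  · rintro ⟨y, hy, hy2⟩
    obtain ⟨q, hq, rfl⟩ := hy
    obtain ⟨q2, hq2, hq2eq⟩ := hy2
    have : q2 = q := f.injective hq2eq
    subst this
    exact ⟨q2, hq, hq2⟩
  · rintro ⟨q, hq, hq2⟩
    exact ⟨f q, ⟨q, hq, rfl⟩, ⟨q, hq2, rfl⟩⟩

/-! ### The trie state type -/

def trieEquiv (k : ℕ) : (Σ i : Fin k, List.Vector Bool i.1) ≃ {u : List Bool // u.length < k} where
  toFun x := ⟨x.2.1, by rw [x.2.2]; exact x.1.2⟩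
  invFun u := ⟨⟨u.1.length, u.2⟩, ⟨u.1, rfl⟩⟩
  left_inv := by
    rintro ⟨⟨i, hi⟩, l, hl⟩
    have h2 : l.length = i := hl
    subst h2
    rfl
  right_inv := by rintro ⟨l, hl⟩; rfl

noncomputable instance trieFintype (k : ℕ) : Fintype {u : List Bool // u.length < k} :=
  Fintype.ofEquiv _ (trieEquiv k)

lemma sum_two_pow (k : ℕ) : ∑ i ∈ Finset.range k, 2 ^ i = 2 ^ k - 1 := by
  induction k with
  | zero => rfl
  | succ k ih =>
    have h1 : 1 ≤ 2 ^ k := Nat.one_le_two_pow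
    rw [Finset.sum_range_succ, ih, pow_succ]
    omega

lemma card_trie (k : ℕ) : Fintype.card {u : List Bool // u.length < k} = 2 ^ k - 1 := by
  rw [← Fintype.card_congr (trieEquiv k), Fintype.card_sigma]
  have : ∀ i : Fin k, Fintype.card (List.Vector Bool i.1) = 2 ^ i.1 := by
    intro i; rw [card_vector]; simp
  rw [Finset.sum_congr rfl fun i _ => this i]
  rw [Fin.sum_univ_eq_sum_range (fun i => 2 ^ i) k, sum_two_pow]

/-! ### The machine -/

variable (n k : ℕ) (F : Set (List Bool))

abbrev QT (n k : ℕ) := {u : List Bool // u.length < k} ⊕ List.Vector Bool (n - k)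

def mstep : QT n k → Bool → Set (QT n k)
  | Sum.inl u, c =>
      if h : u.1.length + 1 < k then {Sum.inl ⟨u.1 ++ [c], by simpa using h⟩}
      else {q | ∃ w : List.Vector Bool (n - k), q = Sum.inr w ∧ (u.1 ++ [c]) ++ w.1 ∈ F}
  | Sum.inr w, _c =>
      {q | ∃ w' : List.Vector Bool (n - k), q = Sum.inr w' ∧ w.1.head? = some _c ∧
        w'.1.dropLast = w.1.tail}

def machine (hk1 : 0 < k) : NFA Bool (QT n k) where
  step := mstep n k F
  start := {Sum.inl ⟨[], by simpa using hk1⟩}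
  accept := Set.univ

/-- The key list lemma for the shift-register gadget. -/
lemma cons_prefix_aux (m : ℕ) (c : Bool) (v w : List Bool)
    (hw : w.length = m) (hv : v.length + 1 ≤ m) :
    ((c :: v) <+: w) ↔
      ∃ w' : List Bool, w'.length = m ∧ w.head? = some c ∧ w'.dropLast = w.tail ∧ v <+: w' := by
  constructor
  · rintro ⟨t, rfl⟩
    refine ⟨(v ++ t) ++ [false], ?_, rfl, ?_, ?_⟩
    · simp at hw ⊢; omega
    · rw [List.dropLast_concat]; rfl
    · rw [List.append_assoc]; exact List.prefix_append _ _
  · rintro ⟨w', hw', hhead, hdrop, r, rfl⟩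
    cases w with
    | nil => simp at hhead
    | cons a t =>
      simp only [List.head?_cons, Option.some.injEq] at hhead
      subst hhead
      rw [List.cons_prefix_cons]
      refine ⟨rfl, ?_⟩
      have hr : r ≠ [] := by
        intro h; subst h; simp at hw'; simp at hw; omega
      have : (v ++ r).dropLast = v ++ r.dropLast := List.dropLast_append_of_ne_nil hr
      rw [this] at hdrop
      simp only [List.tail_cons] at hdrop
      rw [← hdrop]
      exact List.prefix_append _ _

lemma gadget (hk1 : 0 < k) :
    ∀ (v : List Bool) (w : List.Vector Bool (n - k)), v.length ≤ n - k →
      (((machine n k F hk1).evalFrom {Sum.inr w} v).Nonempty ↔ v <+: w.1) := by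
  intro v
  induction v with
  | nil =>
    intro w _
    simp [NFA.evalFrom_nil, List.nil_prefix]
  | cons c v ih =>
    intro w hlen
    rw [evalFrom_cons, stepSet_singleton, nonempty_evalFrom_iff]
    have hstep : (machine n k F hk1).step (Sum.inr w) c =
        {q | ∃ w' : List.Vector Bool (n - k), q = Sum.inr w' ∧ w.1.head? = some c ∧
          w'.1.dropLast = w.1.tail} := rfl
    rw [hstep]
    simp only [List.length_cons] at hlen
    rw [cons_prefix_aux (n - k) c v w.1 w.2 hlen]
    constructor
    · rintro ⟨s, hs, hne⟩
      obtain ⟨w', rfl, hh, hd⟩ := hs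
      rw [ih w' (by omega)] at hne
      exact ⟨w'.1, w'.2, hh, hd, hne⟩
    · rintro ⟨w', hlenw', hh, hd, hpre⟩
      refine ⟨Sum.inr ⟨w', hlenw'⟩, ⟨⟨w', hlenw'⟩, rfl, hh, hd⟩, ?_⟩
      rw [ih ⟨w', hlenw'⟩ (by omega)]
      exact hpre

lemma trie_eval (hk1 : 0 < k) :
    ∀ (y u : List Bool) (h : u.length < k), u.length + y.length = k →
      (machine n k F hk1).evalFrom {Sum.inl ⟨u, h⟩} y =
        {q | ∃ w : List.Vector Bool (n - k), q = Sum.inr w ∧ (u ++ y) ++ w.1 ∈ F} := by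
  intro y
  induction y with
  | nil => intro u h hlen; simp at hlen; omega
  | cons c y ih =>
    intro u h hlen
    rw [evalFrom_cons, stepSet_singleton]
    simp only [List.length_cons] at hlen
    by_cases h2 : u.length + 1 < k
    · have hstep : (machine n k F hk1).step (Sum.inl ⟨u, h⟩) c =
          {Sum.inl (⟨u ++ [c], by simpa using h2⟩ : {u : List Bool // u.length < k})} := by
        show mstep n k F (Sum.inl ⟨u, h⟩) c = _
        rw [mstep, dif_pos h2]
      rw [hstep, ih (u ++ [c]) (by simpa using h2) (by simp; omega)]
      have : (u ++ [c]) ++ y = u ++ (c :: y) := by simp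
      rw [this]
    · have hy : y = [] := by
        have : y.length = 0 := by omega
        exact List.length_eq_zero_iff.1 this
      subst hy
      have hstep : (machine n k F hk1).step (Sum.inl ⟨u, h⟩) c =
          {q | ∃ w : List.Vector Bool (n - k), q = Sum.inr w ∧ (u ++ [c]) ++ w.1 ∈ F} := by
        show mstep n k F (Sum.inl ⟨u, h⟩) c = _
        rw [mstep, dif_neg h2]
      rw [NFA.evalFrom_nil, hstep]

lemma machine_correct (hkn : k ≤ n) (hk1 : 0 < k) :
    ∀ x : List Bool, x.length = n →
      (x ∈ (machine n k F hk1).accepts ↔ x ∈ F) := by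
  intro x hx
  have hsplit : x.take k ++ x.drop k = x := List.take_append_drop k x
  have hp : (x.take k).length = k := by simp [hx]; omega
  have hv : (x.drop k).length = n - k := by simp [hx]
  rw [NFA.mem_accepts]
  have haccept : (machine n k F hk1).accept = Set.univ := rfl
  rw [haccept]
  simp only [Set.mem_univ, true_and, exists_prop]
  have hstart : (machine n k F hk1).start = {Sum.inl ⟨[], by simpa using hk1⟩} := rfl
  rw [← hsplit, hstart, evalFrom_append',
    trie_eval n k F hk1 (x.take k) [] (by simpa using hk1) (by simpa using hp)]
  have key : ((machine n k F hk1).evalFrom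
      {q | ∃ w : List.Vector Bool (n - k), q = Sum.inr w ∧ ([] ++ x.take k) ++ w.1 ∈ F}
      (x.drop k)).Nonempty ↔ x.take k ++ x.drop k ∈ F := by
    rw [nonempty_evalFrom_iff]
    constructor
    · rintro ⟨s, hs, hne⟩
      obtain ⟨w, rfl, hF⟩ := hs
      rw [gadget n k F hk1 (x.drop k) w (le_of_eq hv)] at hne
      have heq := hne.eq_of_length (by rw [hv, w.2])
      rw [heq]
      simpa using hF
    · intro hF
      exact ⟨Sum.inr ⟨x.drop k, hv⟩, ⟨⟨x.drop k, hv⟩, rfl, by simpa using hF⟩,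
        (gadget n k F hk1 (x.drop k) ⟨x.drop k, hv⟩ (le_of_eq hv)).mpr (List.prefix_refl _)⟩
  rw [show (∃ S, S ∈ (machine n k F hk1).evalFrom
      {q | ∃ w : List.Vector Bool (n - k), q = Sum.inr w ∧ ([] ++ x.take k) ++ w.1 ∈ F}
      (x.drop k)) ↔ ((machine n k F hk1).evalFrom
      {q | ∃ w : List.Vector Bool (n - k), q = Sum.inr w ∧ ([] ++ x.take k) ++ w.1 ∈ F}
      (x.drop k)).Nonempty from Iff.rfl, key]

end CPProof

open CPProof

/-- Main theorem: for every F ⊆ {0,1}^n, the length-restricted nondeterministic state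
complexity of F is at most ∑_{i=0}^k a_i where k is the greatest index with a_{k−1} < a_k. -/
theorem main_theorem (n k : ℕ) (hkn : k ≤ n)
    (hk : 1 ≤ k → cpTerm n (k - 1) < cpTerm n k)
    (hk' : ∀ j, k < j → j ≤ n → ¬ cpTerm n (j - 1) < cpTerm n j)
    (F : Set (List Bool)) (hF : ∀ x ∈ F, x.length = n) :
    ∃ M : NFA Bool (Fin (∑ i ∈ Finset.range (k + 1), cpTerm n i)),
      ∀ x : List Bool, x.length = n → (x ∈ M.accepts ↔ x ∈ F) := by
  classical
  by_cases hk0 : 0 < k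
  · -- main case
    -- Step 1: m ≤ k
    have hm : n - k ≤ k := by
      by_contra hmk
      push_neg at hmk
      have hk1n : k + 1 ≤ n := by omega
      have hne := hk' (k + 1) (by omega) hk1n
      apply hne
      simp only [Nat.add_sub_cancel]
      have h1 : cpTerm n k ≤ 2 ^ k := min_le_left _ _
      have h2 : 2 ^ k < cpTerm n (k + 1) := by
        rw [cpTerm]
        apply lt_min
        · exact Nat.pow_lt_pow_right (by norm_num) (by omega)
        · have hx : n - (k + 1) = (n - k) - 1 := by omega
          rw [hx]
          have hk2 : k + 1 ≤ 2 ^ ((n - k) - 1) := by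
            calc k + 1 ≤ 2 ^ k := Nat.lt_two_pow_self
            _ ≤ 2 ^ ((n - k) - 1) := Nat.pow_le_pow_right (by norm_num) (by omega)
          have : 2 ^ (k + 1) ≤ 2 ^ (2 ^ ((n - k) - 1)) :=
            Nat.pow_le_pow_right (by norm_num) hk2
          have h2k : 2 ≤ 2 ^ k := by
            calc 2 = 2 ^ 1 := rfl
            _ ≤ 2 ^ k := Nat.pow_le_pow_right (by norm_num) hk0
          rw [pow_succ] at this
          omega
      omega
    -- Step 2: cpTerm n i = 2 ^ i for i < k
    have hcp : ∀ i, i < k → cpTerm n i = 2 ^ i := by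
      have hk1 := hk hk0
      have hkey : 2 ^ (k - 1) ≤ 2 ^ (2 ^ (n - (k - 1))) - 1 := by
        by_contra hcon
        push_neg at hcon
        have e1 : cpTerm n (k - 1) = 2 ^ (2 ^ (n - (k - 1))) - 1 := by
          rw [cpTerm]; omega
        have e2 : cpTerm n k ≤ 2 ^ (2 ^ (n - k)) - 1 := min_le_right _ _
        have e3 : 2 ^ (2 ^ (n - k)) ≤ 2 ^ (2 ^ (n - (k - 1))) :=
          Nat.pow_le_pow_right (by norm_num) (Nat.pow_le_pow_right (by norm_num) (by omega))
        omega
      intro i hi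
      have h1 : 2 ^ i ≤ 2 ^ (k - 1) := Nat.pow_le_pow_right (by norm_num) (by omega)
      have h2 : 2 ^ (2 ^ (n - (k - 1))) ≤ 2 ^ (2 ^ (n - i)) :=
        Nat.pow_le_pow_right (by norm_num) (Nat.pow_le_pow_right (by norm_num) (by omega))
      rw [cpTerm]
      omega
    -- Step 3: cpTerm n k ≥ 2 ^ (n - k)
    have hck : 2 ^ (n - k) ≤ cpTerm n k := by
      rw [cpTerm]
      apply le_min
      · exact Nat.pow_le_pow_right (by norm_num) hm
      · have h1 : (n - k) + 1 ≤ 2 ^ (n - k) := Nat.lt_two_pow_self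
        have h2 : 2 ^ ((n - k) + 1) ≤ 2 ^ (2 ^ (n - k)) :=
          Nat.pow_le_pow_right (by norm_num) h1
        have h3 : 1 ≤ 2 ^ (n - k) := Nat.one_le_two_pow
        rw [pow_succ] at h2
        omega
    -- Step 4: cardinality bound
    have hcard : Fintype.card (QT n k) ≤ ∑ i ∈ Finset.range (k + 1), cpTerm n i := by
      have e1 : Fintype.card (QT n k) = (2 ^ k - 1) + 2 ^ (n - k) := by
        rw [Fintype.card_sum, card_trie, card_vector]
        simp
      rw [e1, Finset.sum_range_succ]
      have e2 : ∑ i ∈ Finset.range k, cpTerm n i = 2 ^ k - 1 := by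
        rw [Finset.sum_congr rfl fun i hi => hcp i (Finset.mem_range.1 hi), sum_two_pow]
      rw [e2]
      omega
    obtain ⟨M', hM'⟩ := transfer (machine n k F hk0) _ hcard
    refine ⟨M', fun x hx => ?_⟩
    rw [hM']
    exact machine_correct n k F hkn hk0 x hx
  · -- k = 0 : then n ≤ 1
    have hk00 : k = 0 := by omega
    subst hk00
    have hn1 : n ≤ 1 := by
      by_contra hn
      push_neg at hn
      have hne := hk' 1 (by norm_num) (by omega)
      apply hne
      have e0 : cpTerm n 0 = 1 := by
        have h1 : 2 ≤ 2 ^ (n - 0) := by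
          calc 2 = 2 ^ 1 := rfl
          _ ≤ 2 ^ (n - 0) := Nat.pow_le_pow_right (by norm_num) (by omega)
        have h2 : 2 ^ 2 ≤ 2 ^ (2 ^ (n - 0)) := Nat.pow_le_pow_right (by norm_num) h1
        rw [cpTerm]
        simp only [pow_zero]
        omega
      have e1 : cpTerm n 1 = 2 := by
        have h1 : 2 ≤ 2 ^ (n - 1) := by
          calc 2 = 2 ^ 1 := rfl
          _ ≤ 2 ^ (n - 1) := Nat.pow_le_pow_right (by norm_num) (by omega)
        have h2 : 2 ^ 2 ≤ 2 ^ (2 ^ (n - 1)) := Nat.pow_le_pow_right (by norm_num) h1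
        rw [cpTerm]
        simp only [pow_one]
        omega
      show cpTerm n (1 - 1) < cpTerm n 1
      have : (1 : ℕ) - 1 = 0 := rfl
      rw [this, e0, e1]
      norm_num
    -- the sum is at least 1
    have hS : 1 ≤ ∑ i ∈ Finset.range (0 + 1), cpTerm n i := by
      rw [Finset.sum_range_one, cpTerm]
      have h1 : 1 ≤ 2 ^ (n - 0) := Nat.one_le_two_pow
      have h2 : 2 ^ 1 ≤ 2 ^ (2 ^ (n - 0)) := Nat.pow_le_pow_right (by norm_num) h1
      have h3 : (2:ℕ) ^ 1 = 2 := rfl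
      omega
    -- build a 1-state machine on PUnit
    interval_cases n
    · -- n = 0
      obtain ⟨M', hM'⟩ := transfer
        (⟨fun _ _ => ∅, {q : PUnit | [] ∈ F}, Set.univ⟩ : NFA Bool PUnit)
          (∑ i ∈ Finset.range (0 + 1), cpTerm 0 i) (by simpa using hS)
      refine ⟨M', fun x hx => ?_⟩
      rw [hM']
      have hx0 : x = [] := List.length_eq_zero_iff.1 hx
      subst hx0
      rw [NFA.mem_accepts]
      constructor
      · rintro ⟨q, _, hq⟩
        exact hq
      · intro h
        exact ⟨PUnit.unit, Set.mem_univ _, h⟩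
    · -- n = 1
      obtain ⟨M', hM'⟩ := transfer
        (⟨fun _ c => {q : PUnit | [c] ∈ F}, Set.univ, Set.univ⟩ : NFA Bool PUnit)
          (∑ i ∈ Finset.range (0 + 1), cpTerm 1 i)
        (by simpa using hS)
      refine ⟨M', fun x hx => ?_⟩
      rw [hM']
      obtain ⟨c, hc⟩ : ∃ c, x = [c] := by
        match x, hx with
        | [c], _ => exact ⟨c, rfl⟩
      subst hc
      rw [NFA.mem_accepts]
      constructor
      · rintro ⟨q, _, hq⟩
        rw [NFA.evalFrom_singleton, NFA.mem_stepSet] at hq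
        obtain ⟨t, _, hq⟩ := hq
        exact hq
      · intro h
        refine ⟨PUnit.unit, Set.mem_univ _, ?_⟩
        rw [NFA.evalFrom_singleton, NFA.mem_stepSet]
        exact ⟨PUnit.unit, Set.mem_univ _, h⟩
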